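/- Let I ⊆ A ⊆ [n]. Then the number of ordered pairs (a, b) ∈ I² with a < b such that {a, b} is not contained in any 3-AP of A is at most |I|²/4 + |I|·(n − |A|)/2. -/

import Mathlib

/-- The pair `{a, b}` is contained in some 3-AP of `A`: there is a 3-AP
`(u, u+d, u+2d)` with `d ≥ 1` and all three elements in `A` whose underlying
set contains both `a` and `b`. -/
def PairInAP (A : Finset ℕ) (a b : ℕ) : Prop :=
  ∃ u d : ℕ, 0 < d ∧ u ∈ A ∧ u + d ∈ A ∧ u + 2 * d ∈ A ∧
    a ∈ ({u, u + d, u + 2 * d} : Set ℕ) ∧ b ∈ ({u, u + d, u + 2 * d} : Set ℕ)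

theorem stmt_9 (n : ℕ) (I A : Finset ℕ) (hIA : I ⊆ A) (hA : A ⊆ Finset.Icc 1 n) :
    (Nat.card {p : ℕ × ℕ //
        p.1 ∈ I ∧ p.2 ∈ I ∧ p.1 < p.2 ∧ ¬ PairInAP A p.1 p.2} : ℝ) ≤
      (I.card : ℝ) ^ 2 / 4 + (I.card : ℝ) * ((n : ℝ) - A.card) / 2 := by
  classical
  set S : Finset (ℕ × ℕ) :=
    (I ×ˢ I).filter (fun p => p.1 < p.2 ∧ ¬ PairInAP A p.1 p.2) with hS
  have hmemS : ∀ p : ℕ × ℕ,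
      p ∈ S ↔ p.1 ∈ I ∧ p.2 ∈ I ∧ p.1 < p.2 ∧ ¬ PairInAP A p.1 p.2 := by
    intro p
    simp [hS, Finset.mem_filter, Finset.mem_product, and_assoc]
  have hcard : Nat.card {p : ℕ × ℕ //
      p.1 ∈ I ∧ p.2 ∈ I ∧ p.1 < p.2 ∧ ¬ PairInAP A p.1 p.2} = S.card := by
    have hset : {p : ℕ × ℕ | p.1 ∈ I ∧ p.2 ∈ I ∧ p.1 < p.2 ∧ ¬ PairInAP A p.1 p.2}
        = (↑S : Set (ℕ × ℕ)) := by
      ext p; simp [hmemS p]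
    have h' : Nat.card ({p : ℕ × ℕ | p.1 ∈ I ∧ p.2 ∈ I ∧ p.1 < p.2 ∧ ¬ PairInAP A p.1 p.2} : Set (ℕ × ℕ)) = S.card := by
      rw [Nat.card_coe_set_eq, hset, Set.ncard_coe_finset]
    exact h'
  set Se := S.filter (fun p => Even (p.1 + p.2)) with hSe
  set So := S.filter (fun p => ¬ Even (p.1 + p.2)) with hSo
  have hsplit : Se.card + So.card = S.card :=
    Finset.card_filter_add_card_filter_not _
  -- odd part
  have hodd : So.card ≤ (I.filter Even).card * (I.filter (fun x => ¬ Even x)).card := by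
    have := Finset.card_le_card_of_injOn
      (f := fun p : ℕ × ℕ => if Even p.1 then p else p.swap)
      (t := (I.filter Even) ×ˢ (I.filter (fun x => ¬ Even x)))
      ?_ ?_ (s := So)
    · simpa using this
    · intro p hp
      simp only [Finset.mem_coe, hSo, Finset.mem_filter] at hp
      obtain ⟨h1, h2, h3, -⟩ := (hmemS p).1 hp.1
      have hne : ¬ Even (p.1 + p.2) := hp.2
      by_cases h : Even p.1
      · have h2' : Odd p.2 := by
          rw [Nat.odd_iff]
          rw [Nat.even_iff] at h
          rw [Nat.not_even_iff] at hne
          omega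
        simp [h, Finset.mem_product, h1, h2, h2']
      · have h1' : Odd p.1 := Nat.odd_iff.2 (Nat.not_even_iff.1 h)
        have h2' : Even p.2 := by
          rw [Nat.even_iff]
          rw [Nat.odd_iff] at h1'
          rw [Nat.not_even_iff] at hne
          omega
        simp [h, Finset.mem_product, Prod.swap, h1, h2, h1', h2']
    · intro p hp q hq hpq
      have hlt1 : p.1 < p.2 := ((hmemS p).1 (Finset.mem_filter.1 hp).1).2.2.1
      have hlt2 : q.1 < q.2 := ((hmemS q).1 (Finset.mem_filter.1 hq).1).2.2.1
      have key : ∀ r : ℕ × ℕ, r.1 < r.2 →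
          (min (if Even r.1 then r else r.swap).1 (if Even r.1 then r else r.swap).2,
           max (if Even r.1 then r else r.swap).1 (if Even r.1 then r else r.swap).2) = r := by
        intro r hr
        have e1 : min r.1 r.2 = r.1 := min_eq_left hr.le
        have e2 : max r.1 r.2 = r.2 := max_eq_right hr.le
        have e1' : min r.2 r.1 = r.1 := min_eq_right hr.le
        have e2' : max r.2 r.1 = r.2 := max_eq_left hr.le
        by_cases h : Even r.1
        · simp [h, e1, e2]
        · simp [h, e1', e2']
      have e1 := key p hlt1
      have e2 := key q hlt2
      rw [show (if Even p.1 then p else p.swap) = (if Even q.1 then q else q.swap) from hpq] at e1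
      exact e1.symm.trans e2
  -- even part: midpoints
  set T := Finset.Icc 1 n \ A with hT
  have hmid : ∀ p ∈ Se, (p.1 + p.2) / 2 ∈ T := by
    intro p hp
    rw [hSe, Finset.mem_filter] at hp
    obtain ⟨h1, h2, h3, h4⟩ := (hmemS p).1 hp.1
    have he : Even (p.1 + p.2) := hp.2
    have hd2 : 2 ∣ (p.1 + p.2) := he.two_dvd
    have hge : p.1 + 2 ≤ p.2 := by omega
    set m := (p.1 + p.2) / 2 with hm
    have hm2 : p.1 + p.2 = 2 * m := by omega
    have hAn1 := hA (hIA h1)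
    have hAn2 := hA (hIA h2)
    simp only [Finset.mem_Icc] at hAn1 hAn2
    have hmA : m ∉ A := by
      intro hmem
      apply h4
      refine ⟨p.1, m - p.1, by omega, hIA h1, ?_, ?_, ?_, ?_⟩
      · have h' : p.1 + (m - p.1) = m := by omega
        rw [h']; exact hmem
      · have h' : p.1 + 2 * (m - p.1) = p.2 := by omega
        rw [h']; exact hIA h2
      · exact Set.mem_insert _ _
      · right; right
        show p.2 = p.1 + 2 * (m - p.1)
        omega
    rw [hT, Finset.mem_sdiff, Finset.mem_Icc]
    exact ⟨⟨by omega, by omega⟩, hmA⟩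
  have hfib : ∀ m ∈ T, 2 * (Se.filter (fun p => (p.1 + p.2) / 2 = m)).card ≤ I.card := by
    intro m hm
    set F := Se.filter (fun p => (p.1 + p.2) / 2 = m) with hF
    have key : ∀ p ∈ F, p.1 ∈ I ∧ p.2 ∈ I ∧ p.1 < m ∧ m < p.2 ∧ p.1 + p.2 = 2 * m := by
      intro p hp
      rw [hF, Finset.mem_filter, hSe, Finset.mem_filter] at hp
      obtain ⟨⟨hpS, he⟩, hmp⟩ := hp
      obtain ⟨h1, h2, h3, -⟩ := (hmemS p).1 hpS
      have hd2 : 2 ∣ (p.1 + p.2) := he.two_dvd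
      exact ⟨h1, h2, by omega, by omega, by omega⟩
    have hinj1 : Set.InjOn Prod.fst (F : Set (ℕ × ℕ)) := by
      intro p hp q hq h
      have kp := key p hp; have kq := key q hq
      have : p.2 = q.2 := by omega
      exact Prod.ext h this
    have hinj2 : Set.InjOn Prod.snd (F : Set (ℕ × ℕ)) := by
      intro p hp q hq h
      have kp := key p hp; have kq := key q hq
      have : p.1 = q.1 := by omega
      exact Prod.ext this h
    have hc1 : (F.image Prod.fst).card = F.card := Finset.card_image_of_injOn hinj1
    have hc2 : (F.image Prod.snd).card = F.card := Finset.card_image_of_injOn hinj2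
    have hdisj : Disjoint (F.image Prod.fst) (F.image Prod.snd) := by
      rw [Finset.disjoint_left]
      intro x hx1 hx2
      obtain ⟨p, hp, hpx⟩ := Finset.mem_image.1 hx1
      obtain ⟨q, hq, hqx⟩ := Finset.mem_image.1 hx2
      have kp := key p hp; have kq := key q hq
      omega
    have hsub : (F.image Prod.fst ∪ F.image Prod.snd) ⊆ I := by
      intro x hx
      rcases Finset.mem_union.1 hx with hx | hx <;>
        obtain ⟨p, hp, hpx⟩ := Finset.mem_image.1 hx
      · exact hpx ▸ (key p hp).1
      · exact hpx ▸ (key p hp).2.1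
    calc 2 * F.card = (F.image Prod.fst).card + (F.image Prod.snd).card := by omega
      _ = (F.image Prod.fst ∪ F.image Prod.snd).card :=
          (Finset.card_union_of_disjoint hdisj).symm
      _ ≤ I.card := Finset.card_le_card hsub
  have heven : 2 * Se.card ≤ T.card * I.card := by
    rw [Finset.card_eq_sum_card_fiberwise hmid, Finset.mul_sum]
    calc ∑ m ∈ T, 2 * (Se.filter (fun p => (p.1 + p.2) / 2 = m)).card
        ≤ ∑ _m ∈ T, I.card := Finset.sum_le_sum hfib
      _ = T.card * I.card := by rw [Finset.sum_const, smul_eq_mul]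
  -- cardinal arithmetic
  have hAn : A.card ≤ n := by
    have := Finset.card_le_card hA
    simpa [Nat.card_Icc] using this
  have hTcard : T.card = n - A.card := by
    rw [hT, Finset.card_sdiff_of_subset hA, Nat.card_Icc]; omega
  have hIeo : (I.filter Even).card + (I.filter (fun x => ¬ Even x)).card = I.card :=
    Finset.card_filter_add_card_filter_not _
  rw [hcard]
  have hR1 : (So.card : ℝ) ≤ ((I.filter Even).card : ℝ) * ((I.filter (fun x => ¬ Even x)).card : ℝ) := by
    exact_mod_cast hodd
  have hR2 : 2 * (Se.card : ℝ) ≤ ((n : ℝ) - (A.card : ℝ)) * (I.card : ℝ) := by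
    have : (T.card : ℝ) = (n : ℝ) - (A.card : ℝ) := by
      rw [hTcard]; push_cast [hAn]; ring
    calc 2 * (Se.card : ℝ) = ((2 * Se.card : ℕ) : ℝ) := by push_cast; ring
      _ ≤ ((T.card * I.card : ℕ) : ℝ) := by exact_mod_cast heven
      _ = ((n : ℝ) - (A.card : ℝ)) * (I.card : ℝ) := by push_cast [this]; ring
  have hR3 : ((I.filter Even).card : ℝ) + ((I.filter (fun x => ¬ Even x)).card : ℝ)
      = (I.card : ℝ) := by exact_mod_cast hIeo
  have hScard : (S.card : ℝ) = (Se.card : ℝ) + (So.card : ℝ) := by exact_mod_cast hsplit.symm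
  rw [hScard]
  nlinarith [hR1, hR2, hR3, sq_nonneg (((I.filter Even).card : ℝ) - ((I.filter (fun x => ¬ Even x)).card : ℝ))]
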